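/- arXiv:2311.16459 — 2 statements merged into one kernel-verified Lean document; each statement's English description precedes it below -/
import Mathlib

section
/- Let F: ℝ^d → ℝ be convex, H-smooth, with ∇F(w) ≠ 0 at a point w. Suppose at w the agent is predicted non-defecting: F(w) - η‖∇F(w)‖ > ε + δ. Then for any update direction g with ‖g‖ ≤ 1 and η ≤ √(δ/(2H)), we have F(w + ηg) > ε, i.e., the agent does not defect after the update. -/
open RealInnerProductSpace

/-- a predicted non-defecting agent does not defect after any update
of bounded norm, provided η ≤ √(δ/(2H)). -/
theorem stmt_3 {d : ℕ} (F : EuclideanSpace ℝ (Fin d) → ℝ)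
    (gF : EuclideanSpace ℝ (Fin d) → EuclideanSpace ℝ (Fin d))
    (H ε δ η : ℝ) (hH : 0 < H) (hδ : 0 < δ) (hδε : δ ≤ ε) (hη : 0 < η)
    (hconv : ∀ u v, F v + ⟪gF v, u - v⟫ ≤ F u)
    (hlip : ∀ u v, ‖gF u - gF v‖ ≤ H * ‖u - v‖)
    (w : EuclideanSpace ℝ (Fin d)) (hgw : gF w ≠ 0)
    (hnd : F w - η * ‖gF w‖ > ε + δ)
    (g : EuclideanSpace ℝ (Fin d)) (hg : ‖g‖ ≤ 1)
    (hstep : η ≤ Real.sqrt (δ / (2 * H))) :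
    F (w + η • g) > ε := by
  set w' := w + η • g with hw'
  have h1 : F w + ⟪gF w, w' - w⟫ ≤ F w' := hconv w' w
  have hdiff : w' - w = η • g := by rw [hw']; abel
  rw [hdiff, inner_smul_right] at h1
  have hinner : -‖gF w‖ ≤ ⟪gF w, g⟫ := by
    have h2 : |⟪gF w, g⟫| ≤ ‖gF w‖ * ‖g‖ := abs_real_inner_le_norm _ _
    have h3 : ‖gF w‖ * ‖g‖ ≤ ‖gF w‖ * 1 :=
      mul_le_mul_of_nonneg_left hg (norm_nonneg _)
    have := abs_le.mp h2
    linarith [this.1]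
  have h10 : η * (-‖gF w‖) ≤ η * ⟪gF w, g⟫ := mul_le_mul_of_nonneg_left hinner hη.le
  have h11 : η * (-‖gF w‖) = -(η * ‖gF w‖) := by ring
  linarith
end

section
/- Let F₁, ..., F_M: ℝ^d → ℝ be convex and H-smooth, F = (1/M)∑ₘ Fₘ. Let D ⊔ ND = [M] be a partition, F_{ND} = ∑_{m ∈ ND} ∇Fₘ summed gradient at w, P the orthogonal complement of span{∇Fₙ(w) : n ∈ D}, and suppose 0 < ‖Π_P(∇F_{ND}(w))‖ < 1. If g = -Π_P(∇F_{ND}(w)) and η ≤ 1/(MH), then F(w + ηg) ≤ F(w) - (η/(2M))‖Π_P(∇F_{ND}(w))‖². -/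
open RealInnerProductSpace

/-- progress of the ADA-GD projected update in Case 1 (some agents
predicted defecting, some not) when the projected gradient is small. -/
theorem stmt_7 {d M : ℕ} (hM : 0 < M)
    (F : Fin M → EuclideanSpace ℝ (Fin d) → ℝ)
    (gF : Fin M → EuclideanSpace ℝ (Fin d) → EuclideanSpace ℝ (Fin d))
    (H η : ℝ) (hH : 0 < H) (hη : 0 < η) (hηM : η ≤ 1 / (M * H))
    (hconv : ∀ m u v, F m v + ⟪gF m v, u - v⟫ ≤ F m u)
    (hsmooth : ∀ m u v, F m u ≤ F m v + ⟪gF m v, u - v⟫ + H / 2 * ‖u - v‖ ^ 2)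
    (w : EuclideanSpace ℝ (Fin d)) (D : Finset (Fin M))
    (P : Submodule ℝ (EuclideanSpace ℝ (Fin d)))
    (hP : P = (Submodule.span ℝ ((fun n => gF n w) '' (D : Set (Fin M))))ᗮ)
    (p : EuclideanSpace ℝ (Fin d))
    (hp : p = (Submodule.orthogonalProjectionOnto P (∑ m ∈ Dᶜ, gF m w) : EuclideanSpace ℝ (Fin d)))
    (hp0 : 0 < ‖p‖) (hp1 : ‖p‖ < 1) :
    (M : ℝ)⁻¹ * ∑ m, F m (w + η • (-p)) ≤
      (M : ℝ)⁻¹ * ∑ m, F m w - η / (2 * M) * ‖p‖ ^ 2 := by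
  have hpP : p ∈ P := by rw [hp]; exact (Submodule.orthogonalProjectionOnto P _).2
  -- inner products with gradients of defecting agents vanish
  have hD : ∀ m ∈ D, ⟪gF m w, p⟫ = 0 := by
    intro m hm
    have hmem : gF m w ∈ Submodule.span ℝ ((fun n => gF n w) '' (D : Set (Fin M))) :=
      Submodule.subset_span ⟨m, hm, rfl⟩
    have := hP ▸ hpP
    exact (Submodule.mem_orthogonal _ _).1 this _ hmem
  -- inner product of the non-defecting sum with its projection
  have hND : ⟪∑ m ∈ Dᶜ, gF m w, p⟫ = ‖p‖ ^ 2 := by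
    have horth := Submodule.starProjection_inner_eq_zero (K := P) (∑ m ∈ Dᶜ, gF m w) p hpP
    rw [Submodule.starProjection_apply, ← hp] at horth
    have : ⟪∑ m ∈ Dᶜ, gF m w, p⟫ - ⟪p, p⟫ = 0 := by
      rw [← inner_sub_left]; exact horth
    have h2 : ⟪∑ m ∈ Dᶜ, gF m w, p⟫ = ⟪p, p⟫ := by linarith
    rw [h2, real_inner_self_eq_norm_sq]
  -- total inner product
  have hsum : ∑ m, ⟪gF m w, p⟫ = ‖p‖ ^ 2 := by
    rw [← Finset.sum_add_sum_compl D, Finset.sum_eq_zero hD, zero_add, ← sum_inner, hND]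
  -- per-agent smoothness bound
  have hkey : ∀ m, F m (w + η • (-p)) ≤ F m w + (-η) * ⟪gF m w, p⟫ + H / 2 * η ^ 2 * ‖p‖ ^ 2 := by
    intro m
    have := hsmooth m (w + η • (-p)) w
    have hsub : w + η • (-p) - w = (-η) • p := by
      simp [smul_neg, neg_smul]
    rw [hsub] at this
    rw [inner_smul_right, norm_smul] at this
    calc F m (w + η • (-p)) ≤ F m w + (-η) * ⟪gF m w, p⟫ + H / 2 * (‖(-η : ℝ)‖ * ‖p‖) ^ 2 := this
      _ = F m w + (-η) * ⟪gF m w, p⟫ + H / 2 * η ^ 2 * ‖p‖ ^ 2 := by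
          rw [Real.norm_eq_abs]; ring_nf; rw [sq_abs]; ring
  have hsum2 : ∑ m, F m (w + η • (-p)) ≤
      ∑ m, F m w + (-η) * ‖p‖ ^ 2 + M * (H / 2 * η ^ 2 * ‖p‖ ^ 2) := by
    calc ∑ m, F m (w + η • (-p))
        ≤ ∑ m, (F m w + (-η) * ⟪gF m w, p⟫ + H / 2 * η ^ 2 * ‖p‖ ^ 2) :=
          Finset.sum_le_sum fun m _ => hkey m
      _ = ∑ m, F m w + (-η) * ∑ m, ⟪gF m w, p⟫ + M * (H / 2 * η ^ 2 * ‖p‖ ^ 2) := by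
          rw [Finset.sum_add_distrib, Finset.sum_add_distrib, ← Finset.mul_sum,
            Finset.sum_const, Finset.card_univ, Fintype.card_fin, nsmul_eq_mul]
      _ = ∑ m, F m w + (-η) * ‖p‖ ^ 2 + M * (H / 2 * η ^ 2 * ‖p‖ ^ 2) := by rw [hsum]
  have hMpos : (0 : ℝ) < M := by exact_mod_cast hM
  have hMH : η * (M * H) ≤ 1 := by
    rw [le_div_iff₀ (by positivity)] at hηM; linarith
  have hnp : (0 : ℝ) ≤ ‖p‖ ^ 2 := by positivity
  have hfinal : (-η) * ‖p‖ ^ 2 + M * (H / 2 * η ^ 2 * ‖p‖ ^ 2) ≤ -(η / 2 * ‖p‖ ^ 2) := by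
    nlinarith [mul_le_mul_of_nonneg_right hMH (mul_nonneg hη.le hnp)]
  have h3 : ∑ m, F m (w + η • (-p)) ≤ ∑ m, F m w - η / 2 * ‖p‖ ^ 2 := by linarith
  have hMinv : (0 : ℝ) < (M : ℝ)⁻¹ := by positivity
  calc (M : ℝ)⁻¹ * ∑ m, F m (w + η • (-p))
      ≤ (M : ℝ)⁻¹ * (∑ m, F m w - η / 2 * ‖p‖ ^ 2) := by
        exact mul_le_mul_of_nonneg_left h3 hMinv.le
    _ = (M : ℝ)⁻¹ * ∑ m, F m w - η / (2 * M) * ‖p‖ ^ 2 := by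
        field_simp
end
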